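/- Let K be a commutative ring with 2 invertible, a, b units, and A the quaternion algebra as above with the element R from the previous statement. Then R¹⊗xR²⊗R³ = R¹⊗R²⊗R³x for x ∈ {i, j, k}, hence for all x ∈ A. -/

import Mathlib

open TensorProduct Quaternion

namespace QuaternionRMatrix

variable (K : Type*) [CommRing K] (a b : K)

/-- The quaternion unit `i` in `ℍ[K, a, b]` (so `i² = a`). -/
noncomputable def qi : ℍ[K, a, b] := ⟨0, 1, 0, 0⟩

/-- The quaternion unit `j` in `ℍ[K, a, b]` (so `j² = b`). -/
noncomputable def qj : ℍ[K, a, b] := ⟨0, 0, 1, 0⟩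

/-- The quaternion unit `k = ij` in `ℍ[K, a, b]`. -/
noncomputable def qk : ℍ[K, a, b] := ⟨0, 0, 0, 1⟩

variable [Invertible (2 : K)] [Invertible a] [Invertible b]

/-- The canonical R-matrix of the generalized quaternion algebra `A = ℍ[K, a, b]`:
`R = (1/4)(1⊗1⊗1) + (1/4a)(1⊗i⊗i + i⊗1⊗i + i⊗i⊗1) + (1/4b)(1⊗j⊗j + j⊗1⊗j + j⊗j⊗1)
− (1/4ab)(1⊗k⊗k + k⊗1⊗k + k⊗k⊗1) + (1/4ab)(i⊗j⊗k + j⊗k⊗i + k⊗i⊗j)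
− (1/4ab)(j⊗i⊗k + k⊗j⊗i + i⊗k⊗j)`. -/
noncomputable def R : ℍ[K, a, b] ⊗[K] ℍ[K, a, b] ⊗[K] ℍ[K, a, b] :=
  let i := qi K a b
  let j := qj K a b
  let k := qk K a b
  let one : ℍ[K, a, b] := 1
  (⅟(2:K) * ⅟(2:K)) • (one ⊗ₜ[K] one ⊗ₜ[K] one)
  + (⅟(2:K) * ⅟(2:K) * ⅟a) •
      (one ⊗ₜ[K] i ⊗ₜ[K] i + i ⊗ₜ[K] one ⊗ₜ[K] i + i ⊗ₜ[K] i ⊗ₜ[K] one)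
  + (⅟(2:K) * ⅟(2:K) * ⅟b) •
      (one ⊗ₜ[K] j ⊗ₜ[K] j + j ⊗ₜ[K] one ⊗ₜ[K] j + j ⊗ₜ[K] j ⊗ₜ[K] one)
  - (⅟(2:K) * ⅟(2:K) * ⅟a * ⅟b) •
      (one ⊗ₜ[K] k ⊗ₜ[K] k + k ⊗ₜ[K] one ⊗ₜ[K] k + k ⊗ₜ[K] k ⊗ₜ[K] one)
  + (⅟(2:K) * ⅟(2:K) * ⅟a * ⅟b) •
      (i ⊗ₜ[K] j ⊗ₜ[K] k + j ⊗ₜ[K] k ⊗ₜ[K] i + k ⊗ₜ[K] i ⊗ₜ[K] j)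
  - (⅟(2:K) * ⅟(2:K) * ⅟a * ⅟b) •
      (j ⊗ₜ[K] i ⊗ₜ[K] k + k ⊗ₜ[K] j ⊗ₜ[K] i + i ⊗ₜ[K] k ⊗ₜ[K] j)

set_option linter.unusedSectionVars false in
lemma q_ii : qi K a b * qi K a b = a • 1 := by ext <;> simp [qi]

set_option linter.unusedSectionVars false in
lemma q_jj : qj K a b * qj K a b = b • 1 := by ext <;> simp [qj]

set_option linter.unusedSectionVars false in
lemma q_kk : qk K a b * qk K a b = (-(a*b)) • 1 := by ext <;> simp [qk]

set_option linter.unusedSectionVars false in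
lemma q_ij : qi K a b * qj K a b = qk K a b := by ext <;> simp [qi, qj, qk]

set_option linter.unusedSectionVars false in
lemma q_ji : qj K a b * qi K a b = (-1 : K) • qk K a b := by ext <;> simp [qi, qj, qk]

set_option linter.unusedSectionVars false in
lemma q_ik : qi K a b * qk K a b = a • qj K a b := by ext <;> simp [qi, qj, qk]

set_option linter.unusedSectionVars false in
lemma q_ki : qk K a b * qi K a b = (-a) • qj K a b := by ext <;> simp [qi, qj, qk]

set_option linter.unusedSectionVars false in
lemma q_jk : qj K a b * qk K a b = (-b) • qi K a b := by ext <;> simp [qi, qj, qk]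

set_option linter.unusedSectionVars false in
lemma q_kj : qk K a b * qj K a b = b • qi K a b := by ext <;> simp [qi, qj, qk]

abbrev instRingHH : Ring (ℍ[K, a, b] ⊗[K] ℍ[K, a, b]) := Algebra.TensorProduct.instRing

abbrev instRingHHH : Ring (ℍ[K, a, b] ⊗[K] ℍ[K, a, b] ⊗[K] ℍ[K, a, b]) :=
  Algebra.TensorProduct.instRing

section
attribute [local instance] instRingHH instRingHHH

set_option maxHeartbeats 4000000 in
lemma centralizing_basis (y : ℍ[K, a, b])
    (hy : y = qi K a b ∨ y = qj K a b ∨ y = qk K a b) :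
    ((1 : ℍ[K, a, b]) ⊗ₜ[K] y ⊗ₜ[K] (1 : ℍ[K, a, b])) * R K a b
      = R K a b * ((1 : ℍ[K, a, b]) ⊗ₜ[K] (1 : ℍ[K, a, b]) ⊗ₜ[K] y) := by
  obtain rfl | rfl | rfl := hy <;>
  · simp only [R, smul_add, smul_sub, mul_add, add_mul, mul_sub, sub_mul,
      mul_smul_comm, smul_mul_assoc, Algebra.TensorProduct.tmul_mul_tmul,
      one_mul, mul_one, q_ii, q_jj, q_kk, q_ij, q_ji, q_ik, q_ki, q_jk, q_kj,
      TensorProduct.tmul_smul, ← TensorProduct.smul_tmul', smul_smul]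
    match_scalars
    all_goals (first
      | ring1
      | linear_combination (⅟(2:K)*⅟(2:K)) * invOf_mul_self a
      | linear_combination (-(⅟(2:K)*⅟(2:K))) * invOf_mul_self a
      | linear_combination (⅟(2:K)*⅟(2:K)*⅟b) * invOf_mul_self a
      | linear_combination (-(⅟(2:K)*⅟(2:K)*⅟b)) * invOf_mul_self a
      | linear_combination (⅟(2:K)*⅟(2:K)*⅟b*b) * invOf_mul_self a
      | linear_combination (-(⅟(2:K)*⅟(2:K)*⅟b*b)) * invOf_mul_self a
      | linear_combination (⅟(2:K)*⅟(2:K)) * invOf_mul_self b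
      | linear_combination (-(⅟(2:K)*⅟(2:K))) * invOf_mul_self b
      | linear_combination (⅟(2:K)*⅟(2:K)*⅟a) * invOf_mul_self b
      | linear_combination (-(⅟(2:K)*⅟(2:K)*⅟a)) * invOf_mul_self b
      | linear_combination (⅟(2:K)*⅟(2:K)*⅟a*a) * invOf_mul_self b
      | linear_combination (-(⅟(2:K)*⅟(2:K)*⅟a*a)) * invOf_mul_self b
      | linear_combination (⅟(2:K)*⅟(2:K)) * invOf_mul_self b
          - (⅟(2:K)*⅟(2:K)) * invOf_mul_self a
      | linear_combination (⅟(2:K)*⅟(2:K)) * invOf_mul_self a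
          - (⅟(2:K)*⅟(2:K)) * invOf_mul_self b
      | linear_combination (⅟(2:K)*⅟(2:K)*⅟b*b) * invOf_mul_self a
          + (⅟(2:K)*⅟(2:K)) * invOf_mul_self b
      | linear_combination (-(⅟(2:K)*⅟(2:K)*⅟b*b)) * invOf_mul_self a
          - (⅟(2:K)*⅟(2:K)) * invOf_mul_self b)

end

/-- In the generalized quaternion algebra `ℍ[K, a, b]` over a
commutative ring `K` with `2`, `a`, `b` invertible, the explicit element `R` above
satisfies the centralizing condition `R¹ ⊗ xR² ⊗ R³ = R¹ ⊗ R² ⊗ R³x` for `x ∈ {i,j,k}`,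
hence for all `x ∈ A`; equivalently `(1 ⊗ x ⊗ 1) · R = R · (1 ⊗ 1 ⊗ x)` in the
componentwise algebra `A ⊗ A ⊗ A`. -/
theorem quaternion_R_matrix_centralizing :
    ∀ x : ℍ[K, a, b],
      ((1 : ℍ[K, a, b]) ⊗ₜ[K] x ⊗ₜ[K] (1 : ℍ[K, a, b])) * R K a b
        = R K a b * ((1 : ℍ[K, a, b]) ⊗ₜ[K] (1 : ℍ[K, a, b]) ⊗ₜ[K] x) := by
  letI := instRingHH K a b
  letI := instRingHHH K a b
  intro x
  have hx : x = x.re • (1 : ℍ[K, a, b]) + x.imI • qi K a b + x.imJ • qj K a b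
      + x.imK • qk K a b := by
    ext <;> simp [qi, qj, qk]
  have hi := centralizing_basis K a b (qi K a b) (Or.inl rfl)
  have hj := centralizing_basis K a b (qj K a b) (Or.inr (Or.inl rfl))
  have hk := centralizing_basis K a b (qk K a b) (Or.inr (Or.inr rfl))
  have h1 : ((1 : ℍ[K, a, b]) ⊗ₜ[K] (1 : ℍ[K, a, b]) ⊗ₜ[K] (1 : ℍ[K, a, b]))
      = (1 : ℍ[K, a, b] ⊗[K] ℍ[K, a, b] ⊗[K] ℍ[K, a, b]) := rfl
  rw [hx]
  simp only [TensorProduct.tmul_add, TensorProduct.add_tmul, TensorProduct.tmul_smul,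
    ← TensorProduct.smul_tmul', add_mul, mul_add, smul_mul_assoc, mul_smul_comm,
    hi, hj, hk, h1, one_mul, mul_one]
end QuaternionRMatrix
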